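/- (Data processing inequality for multivariate f-divergences) For any Markov kernel K from a finite set Ω to a finite set Z, and distributions P₁,…,Pₙ, α on Ω, D_f(P₁,…,Pₙ ∥ α) ≥ D_f(K∘P₁,…,K∘Pₙ ∥ K∘α), where (K∘μ)(z) = Σ_{ω} K_ω(z) μ(ω). -/

import Mathlib

open scoped ENNReal BigOperators

/-- A probability mass function on a finite set. -/
def IsPMF {Ω : Type*} [Fintype Ω] (p : Ω → ℝ) : Prop :=
  (∀ ω, 0 ≤ p ω) ∧ ∑ ω, p ω = 1

/-- Convexity of an `[0,∞]`-valued function on the nonnegative orthant. -/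
def ConvexOnNonneg {n : Type*} (f : (n → ℝ) → ℝ≥0∞) : Prop :=
  ∀ x y : n → ℝ, (∀ i, 0 ≤ x i) → (∀ i, 0 ≤ y i) →
    ∀ a b : ℝ, 0 ≤ a → 0 ≤ b → a + b = 1 →
      f (fun i => a * x i + b * y i) ≤ ENNReal.ofReal a * f x + ENNReal.ofReal b * f y

/-- The recession function of `f` at `x`, computed from the base point `(1,…,1)` in the
effective domain (since `f(1,…,1) = 0`): `lim_{t→∞} f(𝟙 + t x)/t = ⨆_{t>0} f(𝟙 + t x)/t`. -/
noncomputable def recessionAt {n : Type*} (f : (n → ℝ) → ℝ≥0∞) (x : n → ℝ) : ℝ≥0∞ :=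
  ⨆ t : {t : ℝ // 0 < t}, f (fun i => 1 + (t : ℝ) * x i) / ENNReal.ofReal (t : ℝ)

/-- Multivariate `f`-divergence, with the recession-function convention
`0 · f(x/0) = lim_{t→∞} f(y + t x)/t` when `α ω = 0`. -/
noncomputable def Df {n Ω : Type*} [Fintype Ω] (f : (n → ℝ) → ℝ≥0∞)
    (P : n → Ω → ℝ) (α : Ω → ℝ) : ℝ≥0∞ :=
  ∑ ω, if α ω = 0 then recessionAt f (fun i => P i ω)
    else ENNReal.ofReal (α ω) * f (fun i => P i ω / α ω)

section Aux

variable {n : Type*} {f : (n → ℝ) → ℝ≥0∞}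

lemma f_le_ofReal_mul_recessionAt {x : n → ℝ} {t : ℝ} (ht : 0 < t) :
    f (fun i => 1 + t * x i) ≤ ENNReal.ofReal t * recessionAt f x := by
  have h : f (fun i => 1 + t * x i) / ENNReal.ofReal t ≤ recessionAt f x :=
    le_iSup (fun s : {t : ℝ // 0 < t} =>
      f (fun i => 1 + (s : ℝ) * x i) / ENNReal.ofReal (s : ℝ)) ⟨t, ht⟩
  rw [ENNReal.div_le_iff (ENNReal.ofReal_pos.mpr ht).ne' ENNReal.ofReal_ne_top] at h
  rwa [mul_comm] at h

lemma recessionAt_le {x : n → ℝ} {C : ℝ≥0∞}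
    (h : ∀ t : ℝ, 0 < t → f (fun i => 1 + t * x i) ≤ ENNReal.ofReal t * C) :
    recessionAt f x ≤ C := by
  refine iSup_le fun t => ?_
  rw [ENNReal.div_le_iff (ENNReal.ofReal_pos.mpr t.2).ne' ENNReal.ofReal_ne_top]
  rw [mul_comm]
  exact h t t.2

lemma recessionAt_zero (hf1 : f (fun _ => 1) = 0) :
    recessionAt f (fun _ => (0 : ℝ)) = 0 := by
  refine le_antisymm (recessionAt_le fun t ht => ?_) zero_le
  have : (fun i : n => 1 + t * 0) = (fun _ : n => (1 : ℝ)) := by funext i; ring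
  rw [this, hf1]
  exact zero_le

lemma recessionAt_smul_le {x : n → ℝ} {c : ℝ} (hc : 0 ≤ c) (hf1 : f (fun _ => 1) = 0) :
    recessionAt f (fun i => c * x i) ≤ ENNReal.ofReal c * recessionAt f x := by
  rcases hc.eq_or_lt with rfl | hc
  · have : (fun i : n => (0:ℝ) * x i) = (fun _ : n => (0:ℝ)) := by funext i; ring
    rw [this, recessionAt_zero hf1]
    exact zero_le
  · refine recessionAt_le fun t ht => ?_
    have h1 : (fun i => 1 + t * (c * x i)) = (fun i => 1 + (t * c) * x i) := by
      funext i; ring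
    rw [h1]
    calc f (fun i => 1 + (t * c) * x i) ≤ ENNReal.ofReal (t * c) * recessionAt f x :=
          f_le_ofReal_mul_recessionAt (mul_pos ht hc)
      _ = ENNReal.ofReal t * (ENNReal.ofReal c * recessionAt f x) := by
          rw [ENNReal.ofReal_mul ht.le, mul_assoc]

lemma recessionAt_add_le (hconv : ConvexOnNonneg f) {x y : n → ℝ}
    (hx : ∀ i, 0 ≤ x i) (hy : ∀ i, 0 ≤ y i) :
    recessionAt f (fun i => x i + y i) ≤ recessionAt f x + recessionAt f y := by
  refine recessionAt_le fun t ht => ?_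
  have h2t : 0 < 2 * t := by linarith
  have key : (fun i => 1 + t * (x i + y i))
      = (fun i => (1/2 : ℝ) * (1 + 2 * t * x i) + (1/2 : ℝ) * (1 + 2 * t * y i)) := by
    funext i; ring
  rw [key]
  have hx' : ∀ i, 0 ≤ 1 + 2 * t * x i := fun i => by nlinarith [hx i]
  have hy' : ∀ i, 0 ≤ 1 + 2 * t * y i := fun i => by nlinarith [hy i]
  calc f (fun i => (1/2 : ℝ) * (1 + 2 * t * x i) + (1/2 : ℝ) * (1 + 2 * t * y i))
      ≤ ENNReal.ofReal (1/2) * f (fun i => 1 + 2 * t * x i)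
        + ENNReal.ofReal (1/2) * f (fun i => 1 + 2 * t * y i) :=
        hconv _ _ hx' hy' _ _ (by norm_num) (by norm_num) (by norm_num)
    _ ≤ ENNReal.ofReal (1/2) * (ENNReal.ofReal (2 * t) * recessionAt f x)
        + ENNReal.ofReal (1/2) * (ENNReal.ofReal (2 * t) * recessionAt f y) :=
        add_le_add (mul_le_mul_right (f_le_ofReal_mul_recessionAt h2t) _)
          (mul_le_mul_right (f_le_ofReal_mul_recessionAt h2t) _)
    _ = ENNReal.ofReal t * (recessionAt f x + recessionAt f y) := by
        rw [← mul_assoc, ← mul_assoc, ← ENNReal.ofReal_mul (by norm_num)]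
        have : (1/2 : ℝ) * (2 * t) = t := by ring
        rw [this, mul_add]

lemma recessionAt_sum_le {ι : Type*} (hconv : ConvexOnNonneg f) (hf1 : f (fun _ => 1) = 0)
    (s : Finset ι) (c : ι → ℝ) (x : ι → n → ℝ)
    (hc : ∀ j ∈ s, 0 ≤ c j) (hx : ∀ j ∈ s, ∀ i, 0 ≤ x j i) :
    recessionAt f (fun i => ∑ j ∈ s, c j * x j i)
      ≤ ∑ j ∈ s, ENNReal.ofReal (c j) * recessionAt f (x j) := by
  induction s using Finset.cons_induction with
  | empty => simp [recessionAt_zero hf1]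
  | cons a s ha ih =>
    have hca := hc a (Finset.mem_cons_self a s)
    have hxa := hx a (Finset.mem_cons_self a s)
    have hc' : ∀ j ∈ s, 0 ≤ c j := fun j hj => hc j (Finset.mem_cons_of_mem hj)
    have hx' : ∀ j ∈ s, ∀ i, 0 ≤ x j i := fun j hj => hx j (Finset.mem_cons_of_mem hj)
    have hpt : (fun i => ∑ j ∈ Finset.cons a s ha, c j * x j i)
        = (fun i => (c a * x a i) + ∑ j ∈ s, c j * x j i) := by
      funext i; rw [Finset.sum_cons]
    rw [hpt, Finset.sum_cons]
    calc recessionAt f (fun i => (c a * x a i) + ∑ j ∈ s, c j * x j i)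
        ≤ recessionAt f (fun i => c a * x a i) + recessionAt f (fun i => ∑ j ∈ s, c j * x j i) :=
          recessionAt_add_le hconv (fun i => mul_nonneg hca (hxa i))
            (fun i => Finset.sum_nonneg fun j hj => mul_nonneg (hc' j hj) (hx' j hj i))
      _ ≤ ENNReal.ofReal (c a) * recessionAt f (x a)
          + ∑ j ∈ s, ENNReal.ofReal (c j) * recessionAt f (x j) :=
          add_le_add (recessionAt_smul_le hca hf1) (ih hc' hx')

lemma jensen_sum {ι : Type*} (hconv : ConvexOnNonneg f) (s : Finset ι) (lam : ι → ℝ)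
    (x : ι → n → ℝ) (hlam : ∀ j ∈ s, 0 ≤ lam j) (hx : ∀ j ∈ s, ∀ i, 0 ≤ x j i)
    (hsum : ∑ j ∈ s, lam j = 1) :
    f (fun i => ∑ j ∈ s, lam j * x j i) ≤ ∑ j ∈ s, ENNReal.ofReal (lam j) * f (x j) := by
  induction s using Finset.cons_induction generalizing lam with
  | empty => simp at hsum
  | cons a s ha ih =>
    rw [Finset.sum_cons] at hsum
    have hlama := hlam a (Finset.mem_cons_self a s)
    have hlam' : ∀ j ∈ s, 0 ≤ lam j := fun j hj => hlam j (Finset.mem_cons_of_mem hj)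
    have hxa := hx a (Finset.mem_cons_self a s)
    have hx' : ∀ j ∈ s, ∀ i, 0 ≤ x j i := fun j hj => hx j (Finset.mem_cons_of_mem hj)
    by_cases h1 : lam a = 1
    · have hsz : ∑ j ∈ s, lam j = 0 := by rw [h1] at hsum; linarith
      have hrest : ∀ j ∈ s, lam j = 0 :=
        (Finset.sum_eq_zero_iff_of_nonneg hlam').mp hsz
      have hpt : (fun i => ∑ j ∈ Finset.cons a s ha, lam j * x j i) = x a := by
        funext i
        rw [Finset.sum_cons, h1, one_mul,
          Finset.sum_eq_zero (fun j hj => by rw [hrest j hj, zero_mul]), add_zero]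
      rw [hpt, Finset.sum_cons,
        Finset.sum_eq_zero (fun j hj => by rw [hrest j hj]; simp), h1]
      simp
    · have hrestnn : 0 ≤ ∑ j ∈ s, lam j := Finset.sum_nonneg hlam'
      have hla : lam a < 1 := lt_of_le_of_ne (by linarith) h1
      have hbbpos : 0 < 1 - lam a := by linarith
      set bb := 1 - lam a with hbb
      set mu : ι → ℝ := fun j => lam j / bb with hmu
      have hssum : ∑ j ∈ s, lam j = bb := by rw [hbb]; linarith
      have hmusum : ∑ j ∈ s, mu j = 1 := by
        rw [hmu, ← Finset.sum_div, hssum, div_self hbbpos.ne']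
      have hmunn : ∀ j ∈ s, 0 ≤ mu j := fun j hj =>
        div_nonneg (hlam' j hj) hbbpos.le
      have ihapp := ih mu hmunn hx' hmusum
      set y : n → ℝ := fun i => ∑ j ∈ s, mu j * x j i with hy
      have hynn : ∀ i, 0 ≤ y i := fun i =>
        Finset.sum_nonneg fun j hj => mul_nonneg (hmunn j hj) (hx' j hj i)
      have hpt : (fun i => ∑ j ∈ Finset.cons a s ha, lam j * x j i)
          = (fun i => lam a * x a i + bb * y i) := by
        funext i
        rw [Finset.sum_cons]
        congr 1
        rw [hy, Finset.mul_sum]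
        refine Finset.sum_congr rfl fun j hj => ?_
        rw [hmu]
        field_simp
      rw [hpt, Finset.sum_cons]
      calc f (fun i => lam a * x a i + bb * y i)
          ≤ ENNReal.ofReal (lam a) * f (x a) + ENNReal.ofReal bb * f y :=
            hconv (x a) y hxa hynn _ _ hlama hbbpos.le (by rw [hbb]; ring)
        _ ≤ ENNReal.ofReal (lam a) * f (x a)
            + ENNReal.ofReal bb * ∑ j ∈ s, ENNReal.ofReal (mu j) * f (x j) :=
            add_le_add_right (mul_le_mul_right ihapp _) _
        _ = ENNReal.ofReal (lam a) * f (x a) + ∑ j ∈ s, ENNReal.ofReal (lam j) * f (x j) := by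
            congr 1
            rw [Finset.mul_sum]
            refine Finset.sum_congr rfl fun j hj => ?_
            rw [← mul_assoc, ← ENNReal.ofReal_mul hbbpos.le]
            congr 2
            rw [hmu]
            field_simp

lemma f_add_le_rec (hconv : ConvexOnNonneg f)
    (hlsc : LowerSemicontinuousOn f {x | ∀ i, 0 ≤ x i}) {u v : n → ℝ}
    (hu : ∀ i, 0 ≤ u i) (hv : ∀ i, 0 ≤ v i) :
    f (fun i => u i + v i) ≤ f u + recessionAt f v := by
  by_contra hcon
  push_neg at hcon
  set c := f u + recessionAt f v with hcdef
  set w : ℕ → n → ℝ :=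
    fun m i => (1 - 1/((m:ℝ)+1)) * u i + (1/((m:ℝ)+1)) * (1 + ((m:ℝ)+1) * v i) with hwdef
  have hm1 : ∀ m : ℕ, (0:ℝ) < (m:ℝ) + 1 := fun m => by positivity
  have hanng : ∀ m : ℕ, (0:ℝ) ≤ 1 - 1/((m:ℝ)+1) := by
    intro m
    have h2 : 1/((m:ℝ)+1) ≤ 1 := by
      rw [div_le_one (hm1 m)]
      have : (0:ℝ) ≤ (m:ℝ) := Nat.cast_nonneg m
      linarith
    linarith
  have hwmem : ∀ m, w m ∈ {x : n → ℝ | ∀ i, 0 ≤ x i} := by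
    intro m i
    have h3 : (0:ℝ) ≤ 1 + ((m:ℝ)+1) * v i := by
      have := hv i; nlinarith [hm1 m]
    exact add_nonneg (mul_nonneg (hanng m) (hu i))
      (mul_nonneg (by positivity) h3)
  have hbound : ∀ m, f (w m) ≤ c := by
    intro m
    have h3 : ∀ i, (0:ℝ) ≤ 1 + ((m:ℝ)+1) * v i := by
      intro i; have := hv i; nlinarith [hm1 m]
    have hcv := hconv u (fun i => 1 + ((m:ℝ)+1) * v i) hu h3
      (1 - 1/((m:ℝ)+1)) (1/((m:ℝ)+1)) (hanng m) (by positivity) (by ring)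
    have h2 : f (fun i => 1 + ((m:ℝ)+1) * v i)
        ≤ ENNReal.ofReal ((m:ℝ)+1) * recessionAt f v :=
      f_le_ofReal_mul_recessionAt (hm1 m)
    calc f (w m) ≤ ENNReal.ofReal (1 - 1/((m:ℝ)+1)) * f u
          + ENNReal.ofReal (1/((m:ℝ)+1)) * f (fun i => 1 + ((m:ℝ)+1) * v i) := hcv
      _ ≤ 1 * f u + ENNReal.ofReal (1/((m:ℝ)+1))
            * (ENNReal.ofReal ((m:ℝ)+1) * recessionAt f v) := by
          refine add_le_add (mul_le_mul_left ?_ _) (mul_le_mul_right h2 _)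
          refine ENNReal.ofReal_le_one.mpr ?_
          have hpos : (0:ℝ) ≤ 1/((m:ℝ)+1) := by positivity
          linarith
      _ = f u + ENNReal.ofReal ((1/((m:ℝ)+1)) * ((m:ℝ)+1)) * recessionAt f v := by
          rw [one_mul, ← mul_assoc, ← ENNReal.ofReal_mul (by positivity)]
      _ = c := by
          rw [hcdef]
          congr 1
          rw [one_div, inv_mul_cancel₀ (hm1 m).ne', ENNReal.ofReal_one, one_mul]
  have hmem : (fun i => u i + v i) ∈ {x : n → ℝ | ∀ i, 0 ≤ x i} :=
    fun i => add_nonneg (hu i) (hv i)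
  have hlim : Filter.Tendsto w Filter.atTop
      (nhdsWithin (fun i => u i + v i) {x : n → ℝ | ∀ i, 0 ≤ x i}) := by
    rw [tendsto_nhdsWithin_iff]
    constructor
    · rw [tendsto_pi_nhds]
      intro i
      have heq : (fun m : ℕ => w m i)
          = (fun m : ℕ => u i + v i + (1 - u i) * (1/((m:ℝ)+1))) := by
        funext m
        rw [hwdef]
        have : ((m:ℝ)+1) ≠ 0 := (hm1 m).ne'
        field_simp
        ring
      rw [heq]
      have h0 : Filter.Tendsto (fun m : ℕ => 1/((m:ℝ)+1)) Filter.atTop (nhds 0) :=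
        tendsto_one_div_add_atTop_nhds_zero_nat
      have := (h0.const_mul (1 - u i)).const_add (u i + v i)
      simpa using this
    · exact Filter.Eventually.of_forall hwmem
  have hev := (hlim.eventually (hlsc _ hmem c hcon)).exists
  obtain ⟨m, hm⟩ := hev
  exact absurd (hbound m) (not_le.mpr hm)

end Aux

/-- Data processing inequality: garbling all distributions by a common Markov kernel `K`
decreases the multivariate `f`-divergence. -/
theorem stmt1 {n Ω Z : Type*} [Fintype n] [Fintype Ω] [Fintype Z]
    (f : (n → ℝ) → ℝ≥0∞) (hconv : ConvexOnNonneg f)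
    (hlsc : LowerSemicontinuousOn f {x | ∀ i, 0 ≤ x i})
    (hf1 : f (fun _ => 1) = 0)
    (P : n → Ω → ℝ) (α : Ω → ℝ) (hP : ∀ i, IsPMF (P i)) (hα : IsPMF α)
    (K : Ω → Z → ℝ) (hK : ∀ ω, IsPMF (K ω)) :
    Df f (fun i z => ∑ ω, K ω z * P i ω) (fun z => ∑ ω, K ω z * α ω) ≤ Df f P α := by
  classical
  obtain ⟨hαnn, hαsum⟩ := hα
  have hPnn : ∀ i ω, 0 ≤ P i ω := fun i => (hP i).1
  have hKnn : ∀ ω z, 0 ≤ K ω z := fun ω => (hK ω).1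
  set c : Ω → ℝ≥0∞ := fun ω => if α ω = 0 then recessionAt f (fun i => P i ω)
    else ENNReal.ofReal (α ω) * f (fun i => P i ω / α ω) with hcdef
  have key : ∀ z : Z,
      (if (∑ ω, K ω z * α ω) = 0 then recessionAt f (fun i => ∑ ω, K ω z * P i ω)
        else ENNReal.ofReal (∑ ω, K ω z * α ω)
          * f (fun i => (∑ ω, K ω z * P i ω) / (∑ ω, K ω z * α ω)))
      ≤ ∑ ω, ENNReal.ofReal (K ω z) * c ω := by
    intro z
    by_cases hb : (∑ ω, K ω z * α ω) = 0
    · rw [if_pos hb]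
      have hzero : ∀ ω, K ω z * α ω = 0 := by
        intro ω
        exact (Finset.sum_eq_zero_iff_of_nonneg
          (fun ω _ => mul_nonneg (hKnn ω z) (hαnn ω))).mp hb ω (Finset.mem_univ ω)
      calc recessionAt f (fun i => ∑ ω, K ω z * P i ω)
          ≤ ∑ ω, ENNReal.ofReal (K ω z) * recessionAt f (fun i => P i ω) :=
            recessionAt_sum_le hconv hf1 Finset.univ (fun ω => K ω z) (fun ω i => P i ω)
              (fun ω _ => hKnn ω z) (fun ω _ i => hPnn i ω)
        _ ≤ ∑ ω, ENNReal.ofReal (K ω z) * c ω := by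
            refine Finset.sum_le_sum fun ω _ => ?_
            by_cases hω : α ω = 0
            · rw [hcdef]; simp [hω]
            · have hK0 : K ω z = 0 := by
                rcases mul_eq_zero.mp (hzero ω) with h | h
                · exact h
                · exact absurd h hω
              simp [hK0]
    · rw [if_neg hb]
      set b := ∑ ω, K ω z * α ω with hbdef
      have hbnn : 0 ≤ b :=
        Finset.sum_nonneg fun ω _ => mul_nonneg (hKnn ω z) (hαnn ω)
      have hbpos : 0 < b := lt_of_le_of_ne hbnn (Ne.symm hb)
      set lam : Ω → ℝ := fun ω => K ω z * α ω / b with hlamdef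
      set x : Ω → n → ℝ := fun ω =>
        if α ω = 0 then (fun _ => 1) else (fun i => P i ω / α ω) with hxdef
      set d : Ω → ℝ := fun ω => if α ω = 0 then K ω z / b else 0 with hddef
      have hlamnn : ∀ ω, 0 ≤ lam ω := fun ω =>
        div_nonneg (mul_nonneg (hKnn ω z) (hαnn ω)) hbnn
      have hxnn : ∀ ω i, 0 ≤ x ω i := by
        intro ω i
        rw [hxdef]
        by_cases hω : α ω = 0
        · simp [hω]
        · simp only [hω, if_neg hω]
          exact div_nonneg (hPnn i ω) (hαnn ω)
      have hdnn : ∀ ω, 0 ≤ d ω := by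
        intro ω
        rw [hddef]
        by_cases hω : α ω = 0
        · simp only [hω, if_pos rfl]
          exact div_nonneg (hKnn ω z) hbnn
        · simp [hω]
      have hlamsum : ∑ ω, lam ω = 1 := by
        rw [hlamdef, ← Finset.sum_div, ← hbdef, div_self hbpos.ne']
      have hdecomp : (fun i => (∑ ω, K ω z * P i ω) / b)
          = (fun i => (∑ ω, lam ω * x ω i) + (∑ ω, d ω * P i ω)) := by
        funext i
        rw [Finset.sum_div, ← Finset.sum_add_distrib]
        refine Finset.sum_congr rfl fun ω _ => ?_
        rw [hlamdef, hxdef, hddef]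
        by_cases hω : α ω = 0
        · simp only [hω, if_pos rfl, if_true]
          field_simp; ring
        · simp only [if_neg hω]
          field_simp
          ring
      have hjensen : f (fun i => ∑ ω, lam ω * x ω i)
          ≤ ∑ ω, ENNReal.ofReal (lam ω) * f (x ω) :=
        jensen_sum hconv Finset.univ lam x (fun ω _ => hlamnn ω)
          (fun ω _ i => hxnn ω i) hlamsum
      have hrec : recessionAt f (fun i => ∑ ω, d ω * P i ω)
          ≤ ∑ ω, ENNReal.ofReal (d ω) * recessionAt f (fun i => P i ω) :=
        recessionAt_sum_le hconv hf1 Finset.univ d (fun ω i => P i ω)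
          (fun ω _ => hdnn ω) (fun ω _ i => hPnn i ω)
      have hsplit : f (fun i => (∑ ω, K ω z * P i ω) / b)
          ≤ f (fun i => ∑ ω, lam ω * x ω i) + recessionAt f (fun i => ∑ ω, d ω * P i ω) := by
        rw [hdecomp]
        exact f_add_le_rec hconv hlsc
          (fun i => Finset.sum_nonneg fun ω _ => mul_nonneg (hlamnn ω) (hxnn ω i))
          (fun i => Finset.sum_nonneg fun ω _ => mul_nonneg (hdnn ω) (hPnn i ω))
      calc ENNReal.ofReal b * f (fun i => (∑ ω, K ω z * P i ω) / b)
          ≤ ENNReal.ofReal b * (∑ ω, ENNReal.ofReal (lam ω) * f (x ω)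
              + ∑ ω, ENNReal.ofReal (d ω) * recessionAt f (fun i => P i ω)) :=
            mul_le_mul_right (hsplit.trans (add_le_add hjensen hrec)) _
        _ = ∑ ω, (ENNReal.ofReal (b * lam ω) * f (x ω)
              + ENNReal.ofReal (b * d ω) * recessionAt f (fun i => P i ω)) := by
            rw [mul_add, Finset.mul_sum, Finset.mul_sum, ← Finset.sum_add_distrib]
            refine Finset.sum_congr rfl fun ω _ => ?_
            rw [← mul_assoc, ← mul_assoc, ← ENNReal.ofReal_mul hbnn,
              ← ENNReal.ofReal_mul hbnn]
        _ ≤ ∑ ω, ENNReal.ofReal (K ω z) * c ω := by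
            refine Finset.sum_le_sum fun ω _ => ?_
            by_cases hω : α ω = 0
            · have h1 : b * lam ω = 0 := by
                rw [hlamdef]; simp only []; rw [hω]; field_simp; ring
              have h2 : b * d ω = K ω z := by
                rw [hddef]; simp only [hω, if_pos rfl, if_true]; field_simp
              rw [h1, h2, hcdef]
              simp only [hω, if_pos rfl]
              simp
            · have h1 : b * lam ω = K ω z * α ω := by
                rw [hlamdef]; field_simp
              have h2 : b * d ω = 0 := by
                rw [hddef]; simp [hω]
              rw [h1, h2, hcdef, hxdef]
              simp only [if_neg hω]
              rw [ENNReal.ofReal_mul (hKnn ω z)]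
              simp [mul_assoc]
  calc Df f (fun i z => ∑ ω, K ω z * P i ω) (fun z => ∑ ω, K ω z * α ω)
      = ∑ z, (if (∑ ω, K ω z * α ω) = 0 then recessionAt f (fun i => ∑ ω, K ω z * P i ω)
        else ENNReal.ofReal (∑ ω, K ω z * α ω)
          * f (fun i => (∑ ω, K ω z * P i ω) / (∑ ω, K ω z * α ω))) := rfl
    _ ≤ ∑ z, ∑ ω, ENNReal.ofReal (K ω z) * c ω :=
        Finset.sum_le_sum fun z _ => key z
    _ = ∑ ω, (∑ z, ENNReal.ofReal (K ω z)) * c ω := by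
        rw [Finset.sum_comm]
        exact Finset.sum_congr rfl fun ω _ => (Finset.sum_mul _ _ _).symm
    _ = ∑ ω, c ω := by
        refine Finset.sum_congr rfl fun ω _ => ?_
        rw [← ENNReal.ofReal_sum_of_nonneg (fun z _ => hKnn ω z), (hK ω).2,
          ENNReal.ofReal_one, one_mul]
    _ = Df f P α := rfl
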